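/- Let N₄ ≥ 1 and N₂ ≥ 9 N₄, let a < b, ρ > 0, and let γ : [a, b] → ℝ² be differentiable with ‖γ'(t)‖ ≥ ρ for all t. Suppose there is a unit vector e ∈ ℝ² with γ'(t) · e ≥ (1 − 1/N₂) ‖γ'(t)‖ for all t ∈ [a, b] (tangents aligned with e), and orthonormal vectors u, u⊥ ∈ ℝ² with |γ'(t) · u| ≤ (1 − 1/(4N₄)) ‖γ'(t)‖ for all t ∈ [a, b] (transversality to the direction u). Then for every x₀ ∈ ℝ² and w > 0, the one-dimensional Lebesgue measure of the set { t ∈ [a, b] : |(γ(t) − x₀) · u⊥| ≤ w } is at most 4 √N₄ · w / ρ. -/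

import Mathlib

open scoped InnerProductSpace

lemma parseval2 (u p x : EuclideanSpace ℝ (Fin 2)) (hu : ‖u‖ = 1) (hp : ‖p‖ = 1)
    (hup : ⟪u, p⟫_ℝ = 0) : ⟪x, u⟫_ℝ ^ 2 + ⟪x, p⟫_ℝ ^ 2 = ‖x‖ ^ 2 := by
  have hu2 : ⟪u, u⟫_ℝ = 1 := by rw [real_inner_self_eq_norm_sq, hu]; norm_num
  have hp2 : ⟪p, p⟫_ℝ = 1 := by rw [real_inner_self_eq_norm_sq, hp]; norm_num
  have hx2 : ‖x‖ ^ 2 = ⟪x, x⟫_ℝ := (real_inner_self_eq_norm_sq x).symm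
  rw [hx2]
  simp only [PiLp.inner_apply, RCLike.inner_apply, conj_trivial, Fin.sum_univ_two] at *
  set D := u 0 * p 1 - u 1 * p 0 with hD
  have e0 : u 0 = p 1 * D := by rw [hD]; linear_combination (p 0) * hup - (u 0) * hp2
  have e1 : u 1 = -(p 0) * D := by rw [hD]; linear_combination (p 1) * hup - (u 1) * hp2
  have hDsq : D ^ 2 = 1 := by
    have : (p 1 * D) * (p 1 * D) + (-(p 0) * D) * (-(p 0) * D) = 1 := by
      rw [← e0, ← e1]; exact hu2
    nlinarith [hp2]
  rw [e0, e1]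
  linear_combination (x 0 * p 1 - x 1 * p 0)^2 * hDsq + (x 0 ^2 + x 1^2) * hp2

set_option maxHeartbeats 2000000 in
lemma deriv_lb (N₂ N₄ a b ρ : ℝ) (hN₄ : 1 ≤ N₄) (hN₂ : 9 * N₄ ≤ N₂) (hρ : 0 < ρ)
    (γ' : ℝ → EuclideanSpace ℝ (Fin 2))
    (hlow : ∀ t ∈ Set.Icc a b, ρ ≤ ‖γ' t‖)
    (e u p : EuclideanSpace ℝ (Fin 2))
    (he : ‖e‖ = 1) (hu : ‖u‖ = 1) (hp : ‖p‖ = 1)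
    (horth : ⟪u, p⟫_ℝ = 0)
    (halign : ∀ t ∈ Set.Icc a b, (1 - 1 / N₂) * ‖γ' t‖ ≤ ⟪γ' t, e⟫_ℝ)
    (htrans : ∀ t ∈ Set.Icc a b, |⟪γ' t, u⟫_ℝ| ≤ (1 - 1 / (4 * N₄)) * ‖γ' t‖)
    (hab : a ≤ b) (hsign : 0 ≤ ⟪γ' a, p⟫_ℝ) :
    ∀ t ∈ Set.Icc a b, ρ / (2 * Real.sqrt N₄) ≤ ⟪γ' t, p⟫_ℝ := by
  have hN₄0 : 0 < N₄ := by linarith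
  have hN₂0 : 0 < N₂ := by linarith
  set s := Real.sqrt N₄ with hs
  have hs1 : 1 ≤ s := by
    rw [hs, show (1:ℝ) = Real.sqrt 1 by simp]
    exact Real.sqrt_le_sqrt hN₄
  have hs0 : 0 < s := by linarith
  have hssq : s ^ 2 = N₄ := Real.sq_sqrt hN₄0.le
  -- pointwise lower bound on |⟪γ' t, p⟫|
  have habs : ∀ t ∈ Set.Icc a b, ‖γ' t‖ ≤ 2 * s * |⟪γ' t, p⟫_ℝ| := by
    intro t ht
    have hpar := parseval2 u p (γ' t) hu hp horth
    have htr := htrans t ht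
    have hn : ρ ≤ ‖γ' t‖ := hlow t ht
    have hn0 : 0 < ‖γ' t‖ := hρ.trans_le hn
    have htr' : 4 * N₄ * |⟪γ' t, u⟫_ℝ| ≤ (4 * N₄ - 1) * ‖γ' t‖ := by
      have h1 : (4 * N₄) * ((1 - 1 / (4 * N₄)) * ‖γ' t‖) = (4 * N₄ - 1) * ‖γ' t‖ := by
        field_simp
      nlinarith [htr, hN₄0]
    have hsq : (4 * N₄) ^ 2 * ⟪γ' t, u⟫_ℝ ^ 2 ≤ ((4 * N₄ - 1) * ‖γ' t‖) ^ 2 := by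
      have h0 : 0 ≤ 4 * N₄ * |⟪γ' t, u⟫_ℝ| := by positivity
      nlinarith [sq_abs (⟪γ' t, u⟫_ℝ)]
    have hlb : ‖γ' t‖ ^ 2 ≤ 4 * N₄ * ⟪γ' t, p⟫_ℝ ^ 2 := by
      nlinarith [hpar, hsq, sq_nonneg (‖γ' t‖), hN₄0, sq_nonneg (⟪γ' t, p⟫_ℝ)]
    have h2 : ‖γ' t‖ ^ 2 ≤ (2 * s * |⟪γ' t, p⟫_ℝ|) ^ 2 := by
      rw [mul_pow, mul_pow, sq_abs, hssq]
      nlinarith [hlb]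
    calc ‖γ' t‖ = Real.sqrt (‖γ' t‖ ^ 2) := by rw [Real.sqrt_sq hn0.le]
      _ ≤ Real.sqrt ((2 * s * |⟪γ' t, p⟫_ℝ|) ^ 2) := Real.sqrt_le_sqrt h2
      _ = 2 * s * |⟪γ' t, p⟫_ℝ| := Real.sqrt_sq (by positivity)
  -- constant sign
  have hpos : ∀ t ∈ Set.Icc a b, 0 < ⟪γ' t, p⟫_ℝ := by
    intro t ht
    rcases lt_or_ge 0 (⟪γ' t, p⟫_ℝ) with h | hneg
    · exact h
    exfalso
    have haI : a ∈ Set.Icc a b := ⟨le_rfl, hab⟩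
    have hna : 0 < ‖γ' a‖ := hρ.trans_le (hlow a haI)
    have hnt : 0 < ‖γ' t‖ := hρ.trans_le (hlow t ht)
    set va := ‖γ' a‖⁻¹ • γ' a with hva
    set vt := ‖γ' t‖⁻¹ • γ' t with hvt
    have hva1 : ‖va‖ = 1 := by
      rw [hva, norm_smul, norm_inv, norm_norm, inv_mul_cancel₀ hna.ne']
    have hvt1 : ‖vt‖ = 1 := by
      rw [hvt, norm_smul, norm_inv, norm_norm, inv_mul_cancel₀ hnt.ne']
    have hvap : 1 / (2 * s) ≤ ⟪va, p⟫_ℝ := by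
      have h1 := habs a haI
      rw [abs_of_nonneg hsign] at h1
      have : 1 / (2 * s) ≤ ⟪γ' a, p⟫_ℝ / ‖γ' a‖ := by
        rw [div_le_div_iff₀ (by positivity) hna]
        linarith
      rw [hva, real_inner_smul_left]
      rw [inv_mul_eq_div]
      exact this
    have hvtp : ⟪vt, p⟫_ℝ ≤ -(1 / (2 * s)) := by
      have h1 := habs t ht
      rw [abs_of_nonpos hneg] at h1
      have : ⟪γ' t, p⟫_ℝ / ‖γ' t‖ ≤ -(1 / (2 * s)) := by
        rw [div_le_iff₀ hnt]
        have h2 : -(1 / (2 * s)) * ‖γ' t‖ = -(‖γ' t‖ / (2*s)) := by ring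
        rw [h2, le_neg]
        rw [div_le_iff₀ (by positivity : (0:ℝ) < 2*s)]
        linarith
      rw [hvt, real_inner_smul_left, inv_mul_eq_div]
      exact this
    have haligna : 1 - 1 / N₂ ≤ ⟪va, e⟫_ℝ := by
      rw [hva, real_inner_smul_left, inv_mul_eq_div, le_div_iff₀ hna]
      exact halign a haI
    have halignt : 1 - 1 / N₂ ≤ ⟪vt, e⟫_ℝ := by
      rw [hvt, real_inner_smul_left, inv_mul_eq_div, le_div_iff₀ hnt]
      exact halign t ht
    have hdist : ∀ (v : EuclideanSpace ℝ (Fin 2)), ‖v‖ = 1 → (1 - 1/N₂ ≤ ⟪v, e⟫_ℝ) →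
        (⟪v, p⟫_ℝ - ⟪e, p⟫_ℝ) ^ 2 ≤ 2 / N₂ := by
      intro v hv1 hve
      have h1 : ‖v - e‖ ^ 2 = 2 - 2 * ⟪v, e⟫_ℝ := by
        rw [norm_sub_sq_real, hv1, he]; ring
      have h2 : ‖v - e‖ ^ 2 ≤ 2 / N₂ := by
        rw [h1]
        have : 2 * (1 - 1/N₂) ≤ 2 * ⟪v, e⟫_ℝ := by linarith
        have h3 : 2 - 2 * (1 - 1/N₂) = 2 / N₂ := by field_simp; ring
        linarith
      have h4 : |⟪v - e, p⟫_ℝ| ≤ ‖v - e‖ * ‖p‖ := abs_real_inner_le_norm _ _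
      rw [hp, mul_one] at h4
      have h5 : ⟪v - e, p⟫_ℝ ^ 2 ≤ ‖v - e‖ ^ 2 := by
        rw [← sq_abs]
        exact pow_le_pow_left₀ (abs_nonneg _) h4 2
      rw [inner_sub_left] at h5
      linarith
    have hA := hdist va hva1 haligna
    have hB := hdist vt hvt1 halignt
    have keyreal : ∀ A B : ℝ, A ^ 2 ≤ 2 / N₂ → B ^ 2 ≤ 2 / N₂ → 1 / s ≤ A - B → False := by
      intro A B hA2 hB2 h1s
      have h8 : (A - B) ^ 2 ≤ 8 / N₂ := by
        have h4 : (8:ℝ)/N₂ = 4*(2/N₂) := by ring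
        nlinarith [sq_nonneg (A + B)]
      have hsq2 : (1 / s) ^ 2 ≤ (A - B) ^ 2 := pow_le_pow_left₀ (by positivity) h1s 2
      have h9 : 1 / s ^ 2 ≤ 8 / N₂ := by
        rw [← one_div_pow]
        linarith
      rw [div_le_div_iff₀ (by positivity) hN₂0] at h9
      nlinarith [hssq, hN₂, hN₄]
    apply keyreal (⟪va, p⟫_ℝ - ⟪e, p⟫_ℝ) (⟪vt, p⟫_ℝ - ⟪e, p⟫_ℝ) hA hB
    have hsum : 1 / (2 * s) + 1 / (2 * s) = 1 / s := by
      rw [← add_div, div_eq_div_iff (by positivity) hs0.ne']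
      ring
    linarith
  intro t ht
  have h1 := habs t ht
  rw [abs_of_pos (hpos t ht)] at h1
  have hn := hlow t ht
  rw [div_le_iff₀ (by positivity : (0:ℝ) < 2 * s)]
  nlinarith [hpos t ht]

lemma tube_measure (a b c w : ℝ) (hc : 0 < c) (f f' : ℝ → ℝ)
    (hf : ∀ t ∈ Set.Icc a b, HasDerivAt f (f' t) t)
    (hf' : ∀ t ∈ Set.Icc a b, c ≤ f' t) :
    MeasureTheory.volume {t | t ∈ Set.Icc a b ∧ |f t| ≤ w} ≤ ENNReal.ofReal (2 * w / c) := by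
  set S := {t | t ∈ Set.Icc a b ∧ |f t| ≤ w} with hSdef
  have hS : S ⊆ Set.Icc a b := fun t ht => ht.1
  rcases Set.eq_empty_or_nonempty S with hne | hne
  · simp [hne]
  have hg : MonotoneOn (fun x => f x - c * x) (Set.Icc a b) := by
    have hder : ∀ x ∈ Set.Icc a b, HasDerivAt (fun x => f x - c * x) (f' x - c) x := by
      intro x hx
      have h := (hf x hx).sub ((hasDerivAt_id x).const_mul c); rw [mul_one] at h; exact h
    apply monotoneOn_of_deriv_nonneg (convex_Icc a b)
    · exact fun x hx => (hder x hx).continuousAt.continuousWithinAt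
    · intro x hx
      rw [interior_Icc] at hx
      exact (hder x (Set.Ioo_subset_Icc_self hx)).differentiableAt.differentiableWithinAt
    · intro x hx
      rw [interior_Icc] at hx
      rw [(hder x (Set.Ioo_subset_Icc_self hx)).deriv]
      linarith [hf' x (Set.Ioo_subset_Icc_self hx)]
  have key : ∀ s ∈ S, ∀ t ∈ S, s ≤ t → t - s ≤ 2 * w / c := by
    intro s hs t ht hst
    have h1 : f s - c * s ≤ f t - c * t := hg (hS hs) (hS ht) hst
    have h2 : |f s| ≤ w := hs.2
    have h3 : |f t| ≤ w := ht.2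
    rw [abs_le] at h2 h3
    rw [le_div_iff₀ hc]
    nlinarith
  obtain ⟨t₀, ht₀⟩ := hne
  have hbdd : BddBelow S := (bddBelow_Icc : BddBelow (Set.Icc a b)).mono hS
  set m := sInf S with hm
  have hsub : S ⊆ Set.Icc m (m + 2 * w / c) := by
    intro t ht
    refine ⟨csInf_le hbdd ht, ?_⟩
    have hlb : t - 2 * w / c ≤ m := by
      apply le_csInf ⟨t₀, ht₀⟩
      intro s hs
      rcases le_total s t with h | h
      · linarith [key s hs t ht h]
      · have : t - s ≤ 0 := by linarith
        have h2w : 0 ≤ 2 * w / c := by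
          have := key t ht t ht le_rfl
          linarith
        linarith
    linarith
  calc MeasureTheory.volume S ≤ MeasureTheory.volume (Set.Icc m (m + 2 * w / c)) :=
        MeasureTheory.measure_mono hsub
    _ = ENNReal.ofReal (2 * w / c) := by rw [Real.volume_Icc]; ring_nf

set_option maxHeartbeats 1000000 in
/-- Time-in-a-tube bound: a planar curve whose tangent directions are aligned with a
fixed unit vector `e` at level `1 - 1/N₂` and transversal to a direction `u` at level
`1 - 1/(4N₄)` (with `N₂ ≥ 9N₄`) spends, inside any tube of width `w` in the direction
`u` (i.e. the set where the `u⊥` coordinate is within `w` of a fixed value), a time of at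
most `4√N₄ w/ρ`, where `ρ` is a lower bound for the speed. -/
theorem time_in_tube (N₂ N₄ a b ρ : ℝ) (hN₄ : 1 ≤ N₄) (hN₂ : 9 * N₄ ≤ N₂)
    (hab : a < b) (hρ : 0 < ρ)
    (γ γ' : ℝ → EuclideanSpace ℝ (Fin 2))
    (hγ : ∀ t ∈ Set.Icc a b, HasDerivAt γ (γ' t) t)
    (hlow : ∀ t ∈ Set.Icc a b, ρ ≤ ‖γ' t‖)
    (e u uperp : EuclideanSpace ℝ (Fin 2))
    (he : ‖e‖ = 1) (hu : ‖u‖ = 1) (huperp : ‖uperp‖ = 1)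
    (horth : ⟪u, uperp⟫_ℝ = 0)
    (halign : ∀ t ∈ Set.Icc a b, (1 - 1 / N₂) * ‖γ' t‖ ≤ ⟪γ' t, e⟫_ℝ)
    (htrans : ∀ t ∈ Set.Icc a b, |⟪γ' t, u⟫_ℝ| ≤ (1 - 1 / (4 * N₄)) * ‖γ' t‖) :
    ∀ (x₀ : EuclideanSpace ℝ (Fin 2)) (w : ℝ), 0 < w →
      MeasureTheory.volume {t | t ∈ Set.Icc a b ∧ |⟪γ t - x₀, uperp⟫_ℝ| ≤ w}
        ≤ ENNReal.ofReal (4 * Real.sqrt N₄ * w / ρ) := by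
  intro x₀ w hw
  have hN₄0 : 0 < N₄ := by linarith
  have hs0 : 0 < Real.sqrt N₄ := Real.sqrt_pos.mpr hN₄0
  set c := ρ / (2 * Real.sqrt N₄) with hc
  have hc0 : 0 < c := by positivity
  have hgoal : 2 * w / c = 4 * Real.sqrt N₄ * w / ρ := by
    rw [hc]; field_simp; ring
  rw [← hgoal]
  have hmain : ∀ p : EuclideanSpace ℝ (Fin 2), ‖p‖ = 1 → ⟪u, p⟫_ℝ = 0 →
      0 ≤ ⟪γ' a, p⟫_ℝ →
      MeasureTheory.volume {t | t ∈ Set.Icc a b ∧ |⟪γ t - x₀, p⟫_ℝ| ≤ w}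
        ≤ ENNReal.ofReal (2 * w / c) := by
    intro p hp hop hsgn
    have hlb := deriv_lb N₂ N₄ a b ρ hN₄ hN₂ hρ γ' hlow e u p he hu hp hop
      halign htrans hab.le hsgn
    apply tube_measure a b c w hc0 (fun τ => ⟪γ τ - x₀, p⟫_ℝ) (fun τ => ⟪γ' τ, p⟫_ℝ)
    · intro t ht
      have h1 := ((hγ t ht).sub_const x₀).inner ℝ (hasDerivAt_const t p)
      simpa using h1
    · exact hlb
  rcases le_or_gt 0 (⟪γ' a, uperp⟫_ℝ) with hsgn | hsgn
  · exact hmain uperp huperp horth hsgn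
  · have hset : {t | t ∈ Set.Icc a b ∧ |⟪γ t - x₀, uperp⟫_ℝ| ≤ w}
        = {t | t ∈ Set.Icc a b ∧ |⟪γ t - x₀, -uperp⟫_ℝ| ≤ w} := by
      ext τ
      simp only [Set.mem_setOf_eq, inner_neg_right, abs_neg]
    rw [hset]
    apply hmain (-uperp) (by rw [norm_neg]; exact huperp)
      (by rw [inner_neg_right, horth]; ring)
      (by rw [inner_neg_right]; linarith)
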